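/- Let d ≥ 2 and let u > v ≥ 1 be integers. Let P = {(i_1,…,i_d) ∈ ℤ^d : 0 ≤ i_j ≤ u−1 for 1 ≤ j ≤ d−1, and 0 ≤ i_d ≤ duv−1}, so |P| = d·u^d·v. Then every hyperplane of the form x_d = a_1x_1 + a_2x_2 + ⋯ + a_{d−1}x_{d−1} + a_d with integer coefficients satisfying 0 ≤ a_i ≤ v−1 for 1 ≤ i ≤ d−1 and 0 ≤ a_d ≤ uv−1 contains at least u^{d−1} points of P; consequently, with k = u^{d−1} and n = |P| = d·u^d·v, the number of k-rich hyperplanes with respect to P is at least u·v^d = n^d/(d^d·k^{d+1}). -/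

import Mathlib

open Finset in
private lemma stmt10_filt_card (d : ℕ) (hd : 1 ≤ d) :
    (Finset.univ.filter fun j : Fin d => (j:ℕ) < d-1).card = d - 1 := by
  rw [Finset.card_filter]
  rw [Fin.sum_univ_eq_sum_range (fun i => if i < d-1 then 1 else 0)]
  rw [← Finset.card_filter]
  have : Finset.filter (fun i => i < d-1) (Finset.range d) = Finset.range (d-1) := by
    ext i; simp; omega
  rw [this, Finset.card_range]

private lemma stmt10_prod_ite (d A B : ℕ) (hd : 1 ≤ d) :
    (∏ j : Fin d, (if (j:ℕ) < d-1 then A else B)) = A^(d-1) * B := by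
  rw [Finset.prod_ite]
  rw [Finset.prod_const, Finset.prod_const, stmt10_filt_card d hd]
  have h2 : (Finset.univ.filter fun j : Fin d => ¬ ((j:ℕ) < d-1)).card = 1 := by
    have := Finset.card_filter_add_card_filter_not
      (s := (Finset.univ : Finset (Fin d))) (p := fun j : Fin d => (j:ℕ) < d-1)
    rw [stmt10_filt_card d hd, Finset.card_univ, Fintype.card_fin] at this
    omega
  rw [h2, pow_one]

theorem stmt_10 (d u v : ℕ) (hd : 2 ≤ d) (hvu : v < u) (hv : 1 ≤ v)
    (P : Set (EuclideanSpace ℝ (Fin d)))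
    (hP : P = {x : EuclideanSpace ℝ (Fin d) | ∀ j : Fin d, ∃ m : ℕ,
      x j = (m : ℝ) ∧ (if (j : ℕ) < d - 1 then m ≤ u - 1 else m ≤ d * u * v - 1)}) :
    P.ncard = d * u ^ d * v ∧
    (∀ a : Fin d → ℕ,
      (∀ j : Fin d, (j : ℕ) < d - 1 → a j ≤ v - 1) →
      a ⟨d - 1, by omega⟩ ≤ u * v - 1 →
      u ^ (d - 1) ≤ (P ∩ {x : EuclideanSpace ℝ (Fin d) |
        x ⟨d - 1, by omega⟩ =
          (∑ j ∈ Finset.univ.filter (fun j : Fin d => (j : ℕ) < d - 1), (a j : ℝ) * x j)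
            + (a ⟨d - 1, by omega⟩ : ℝ)}).ncard) ∧
    (∃ H : Finset (AffineSubspace ℝ (EuclideanSpace ℝ (Fin d))),
      u * v ^ d ≤ H.card ∧
      (∀ h ∈ H, Module.finrank ℝ h.direction = d - 1 ∧
        u ^ (d - 1) ≤ (P ∩ (h : Set (EuclideanSpace ℝ (Fin d)))).ncard)) ∧
    ((u * v ^ d : ℝ) =
      ((d * u ^ d * v : ℕ) : ℝ) ^ d / ((d : ℝ) ^ d * ((u : ℝ) ^ (d - 1)) ^ (d + 1))) := by
  classical
  have hu : 1 ≤ u := by omega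
  have hd1 : 1 ≤ d := by omega
  set L : Fin d := ⟨d-1, by omega⟩ with hL
  set filt : Finset (Fin d) := Finset.univ.filter (fun j : Fin d => (j : ℕ) < d - 1) with hfilt
  set F : (Fin d → ℕ) → EuclideanSpace ℝ (Fin d) :=
    fun m => (WithLp.toLp 2 (fun j => (m j : ℝ)) : EuclideanSpace ℝ (Fin d)) with hF
  have hFinj : Function.Injective F := fun m m' h =>
    funext fun j => Nat.cast_injective (congrArg (fun x => x j) h)
  set S : Finset (Fin d → ℕ) := Fintype.piFinset fun j : Fin d =>
    Finset.range ((if (j:ℕ) < d-1 then u-1 else d*u*v-1) + 1) with hS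
  have hduv : 1 ≤ d*u*v := Nat.one_le_iff_ne_zero.mpr (by positivity)
  have hPS : P = F '' ↑S := by
    rw [hP]; ext x
    simp only [hS, Set.mem_setOf_eq, Set.mem_image, Finset.mem_coe, Fintype.mem_piFinset,
      Finset.mem_range]
    constructor
    · intro h
      choose m hm using h
      refine ⟨m, fun j => ?_, (congrArg (WithLp.toLp 2) (funext fun j => (hm j).1.symm) : F m = x)⟩
      have := (hm j).2
      by_cases hj : (j:ℕ) < d-1 <;> simp [hj] at this ⊢ <;> omega
    · rintro ⟨m, hm, rfl⟩
      intro j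
      refine ⟨m j, rfl, ?_⟩
      have := hm j
      by_cases hj : (j:ℕ) < d-1 <;> simp [hj] at this ⊢ <;> omega
  have hPfin : P.Finite := by rw [hPS]; exact (S.finite_toSet.image F)
  -- cardinality of P
  have hcard : P.ncard = d * u ^ d * v := by
    rw [hPS, Set.ncard_image_of_injective _ hFinj, Set.ncard_coe_finset, hS,
      Fintype.card_piFinset]
    simp only [Finset.card_range]
    have : ∀ j : Fin d, (if (j:ℕ) < d-1 then u-1 else d*u*v-1) + 1
        = (if (j:ℕ) < d-1 then u else d*u*v) := by
      intro j; by_cases hj : (j:ℕ) < d-1 <;> simp [hj] <;> omega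
    rw [Finset.prod_congr rfl (fun j _ => this j), stmt10_prod_ite d u (d*u*v) hd1]
    have h1 : u^(d-1)*u = u^d := by rw [← pow_succ]; congr 1; omega
    calc u^(d-1)*(d*u*v) = d*(u^(d-1)*u)*v := by ring
      _ = d*u^d*v := by rw [h1]
  have huv : 1 ≤ u*v := Nat.one_le_iff_ne_zero.mpr (by positivity)
  have hNL : ¬ ((L:ℕ) < d - 1) := by simp [hL]
  have key : ∀ a : Fin d → ℕ,
      (∀ j : Fin d, (j : ℕ) < d - 1 → a j ≤ v - 1) →
      a L ≤ u * v - 1 →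
      u ^ (d - 1) ≤ (P ∩ {x : EuclideanSpace ℝ (Fin d) |
        x L = (∑ j ∈ filt, (a j : ℝ) * x j) + (a L : ℝ)}).ncard := by
    intro a ha haL
    set T : Finset (Fin d → ℕ) := Fintype.piFinset fun j : Fin d =>
      if (j:ℕ) < d-1 then Finset.range u else {0} with hT
    set g : (Fin d → ℕ) → (Fin d → ℕ) :=
      fun m j => if (j:ℕ) < d-1 then m j else (∑ i ∈ filt, a i * m i) + a L with hg
    have hTcard : T.card = u^(d-1) := by
      rw [hT, Fintype.card_piFinset]
      have hc : ∀ j : Fin d, ((if (j:ℕ) < d-1 then Finset.range u else {0}).card)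
          = (if (j:ℕ) < d-1 then u else 1) := by
        intro j; by_cases hj : (j:ℕ) < d-1 <;> simp [hj]
      rw [Finset.prod_congr rfl (fun j _ => hc j), stmt10_prod_ite d u 1 hd1, mul_one]
    have hinj : Set.InjOn (F ∘ g) ↑T := by
      intro m hm m' hm' h
      simp only [Finset.mem_coe, hT, Fintype.mem_piFinset] at hm hm'
      funext j
      by_cases hj : (j:ℕ) < d-1
      · have h2 := (Nat.cast_injective : Function.Injective (Nat.cast : ℕ → ℝ)) (congrArg (fun x => x j) h : ((g m j : ℕ) : ℝ) = g m' j)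
        simpa [hg, hj] using h2
      · have h1 := hm j; have h2 := hm' j
        simp only [hj, if_false, Finset.mem_singleton] at h1 h2
        rw [h1, h2]
    have hsub : (F ∘ g) '' ↑T ⊆ P ∩ {x : EuclideanSpace ℝ (Fin d) |
        x L = (∑ j ∈ filt, (a j : ℝ) * x j) + (a L : ℝ)} := by
      rintro _ ⟨m, hm, rfl⟩
      simp only [Finset.mem_coe, hT, Fintype.mem_piFinset] at hm
      have hsum : (∑ i ∈ filt, a i * m i) ≤ (d-1) * ((v-1)*(u-1)) := by
        calc ∑ i ∈ filt, a i * m i ≤ ∑ _i ∈ filt, (v-1)*(u-1) := by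
              apply Finset.sum_le_sum
              intro i hi
              have hi' : (i:ℕ) < d-1 := by simpa [hfilt] using hi
              have hmi := hm i
              simp only [hi', if_true, Finset.mem_range] at hmi
              exact Nat.mul_le_mul (ha i hi') (by omega)
          _ = (d-1) * ((v-1)*(u-1)) := by
              rw [Finset.sum_const, hfilt, stmt10_filt_card d hd1, smul_eq_mul]
      have hfin : (d-1)*((v-1)*(u-1)) + (u*v - 1) ≤ d*u*v - 1 := by
        zify [hu, hv, hd1, huv, hduv]
        nlinarith [Nat.one_le_iff_ne_zero.mp hu, (by exact_mod_cast hu : (1:ℤ) ≤ u),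
          (by exact_mod_cast hv : (1:ℤ) ≤ v), (by exact_mod_cast hd1 : (1:ℤ) ≤ d)]
      constructor
      · rw [hP]
        intro j
        refine ⟨g m j, rfl, ?_⟩
        by_cases hj : (j:ℕ) < d-1
        · have hmj := hm j
          simp only [hj, if_true, Finset.mem_range] at hmj
          simp only [hg, hj, if_true]
          omega
        · simp only [hg, hj, if_false]
          exact le_trans (Nat.add_le_add hsum haL) hfin
      · have hgL : g m L = (∑ i ∈ filt, a i * m i) + a L := by
          simp [hg, hNL]
        have hgj : ∀ j ∈ filt, ((F ∘ g) m) j = (m j : ℝ) := by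
          intro j hjf
          have hj : (j:ℕ) < d-1 := by simpa [hfilt] using hjf
          simp only [Function.comp_apply, hF, hg, hj, if_true]
        simp only [Set.mem_setOf_eq]
        rw [Finset.sum_congr rfl (fun j hj => by rw [hgj j hj])]
        show ((g m L : ℕ) : ℝ) = _
        rw [hgL]
        push_cast
        ring
    calc u^(d-1) = T.card := hTcard.symm
      _ = ((F ∘ g) '' ↑T).ncard := by
          rw [Set.ncard_image_of_injOn hinj, Set.ncard_coe_finset]
      _ ≤ _ := Set.ncard_le_ncard hsub (hPfin.inter_of_left _)
  set f : (Fin d → ℕ) → (EuclideanSpace ℝ (Fin d) →ₗ[ℝ] ℝ) := fun a =>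
    { toFun := fun x => x L - ∑ j ∈ filt, (a j : ℝ) * x j
      map_add' := by
        intro x y
        simp only [PiLp.add_apply, mul_add, Finset.sum_add_distrib]
        ring
      map_smul' := by
        intro c x
        simp only [PiLp.smul_apply, smul_eq_mul, RingHom.id_apply, mul_sub, Finset.mul_sum]
        congr 1
        apply Finset.sum_congr rfl
        intro j _
        ring } with hf
  have hfapply : ∀ (a : Fin d → ℕ) x, f a x = x L - ∑ j ∈ filt, (a j : ℝ) * x j :=
    fun a x => rfl
  have hsingle : ∀ (a : Fin d → ℕ) (c : ℝ), f a (EuclideanSpace.single L c) = c := by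
    intro a c
    rw [hfapply]
    have h0 : ∑ j ∈ filt, (a j : ℝ) * (EuclideanSpace.single L c) j = 0 := by
      apply Finset.sum_eq_zero
      intro j hj
      have hj' : (j:ℕ) < d-1 := by simpa [hfilt] using hj
      have hne : j ≠ L := by
        intro e; rw [e] at hj'; exact hNL hj'
      rw [EuclideanSpace.single_apply, if_neg hne, mul_zero]
    rw [h0, EuclideanSpace.single_apply, if_pos rfl, sub_zero]
  have hker : ∀ a : Fin d → ℕ, Module.finrank ℝ (LinearMap.ker (f a)) = d - 1 := by
    intro a
    have hsurj : Function.Surjective (f a) := fun c =>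
      ⟨EuclideanSpace.single L c, hsingle a c⟩
    have hrange : LinearMap.range (f a) = ⊤ := LinearMap.range_eq_top.mpr hsurj
    have heq := LinearMap.finrank_range_add_finrank_ker (f a)
    rw [hrange, finrank_top, finrank_euclideanSpace_fin] at heq
    simp only [Module.finrank_self] at heq
    omega
  set hyp : (Fin d → ℕ) → AffineSubspace ℝ (EuclideanSpace ℝ (Fin d)) := fun a =>
    AffineSubspace.mk' (EuclideanSpace.single L ((a L : ℝ))) (LinearMap.ker (f a)) with hhyp
  have hmem : ∀ (a : Fin d → ℕ) (x : EuclideanSpace ℝ (Fin d)),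
      x ∈ hyp a ↔ x L = (∑ j ∈ filt, (a j : ℝ) * x j) + (a L : ℝ) := by
    intro a x
    rw [hhyp]
    rw [AffineSubspace.mem_mk', LinearMap.mem_ker]
    have hv2 : f a (x -ᵥ EuclideanSpace.single L ((a L : ℝ))) = f a x - (a L : ℝ) := by
      rw [vsub_eq_sub, map_sub, hsingle]
    rw [hv2, hfapply]
    constructor <;> intro h <;> linarith
  set A : Finset (Fin d → ℕ) := Fintype.piFinset fun j : Fin d =>
    Finset.range (if (j:ℕ) < d-1 then v else u*v) with hA
  have hAcard : A.card = u * v ^ d := by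
    rw [hA, Fintype.card_piFinset]
    simp only [Finset.card_range]
    rw [stmt10_prod_ite d v (u*v) hd1]
    have hp : v^(d-1)*v = v^d := by rw [← pow_succ]; congr 1; omega
    calc v^(d-1)*(u*v) = (v^(d-1)*v)*u := by ring
      _ = u * v^d := by rw [hp]; ring
  have hinjA : Set.InjOn hyp ↑A := by
    intro a _ a' _ h
    have hsets : ∀ x, (x ∈ hyp a ↔ x ∈ hyp a') := fun x => by rw [h]
    have e2 : ∀ (b : Fin d → ℕ) (c : ℝ),
        ∑ j ∈ filt, (b j : ℝ) * (EuclideanSpace.single L c) j = 0 := by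
      intro b c
      apply Finset.sum_eq_zero
      intro j hj
      have hj' : (j:ℕ) < d-1 := by simpa [hfilt] using hj
      have hne : j ≠ L := fun e => hNL (e ▸ hj')
      rw [EuclideanSpace.single_apply, if_neg hne, mul_zero]
    have e1 : ∀ c : ℝ, (EuclideanSpace.single L c) L = c := by
      intro c; rw [EuclideanSpace.single_apply, if_pos rfl]
    have hLL : (a L : ℝ) = a' L := by
      have h0 := (hsets (EuclideanSpace.single L ((a L : ℝ))))
      rw [hmem, hmem] at h0
      have := h0.mp (by rw [e1, e2, zero_add])
      rw [e1, e2, zero_add] at this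
      exact this
    have haj : ∀ j0 : Fin d, (j0:ℕ) < d - 1 → (a j0 : ℝ) = a' j0 := by
      intro j0 hj0'
      have hj0 : j0 ∈ filt := by simp [hfilt, hj0']
      have hne : j0 ≠ L := fun e => hNL (e ▸ hj0')
      set x : EuclideanSpace ℝ (Fin d) :=
        (WithLp.toLp 2 (fun j => if j = j0 then 1 else if j = L then ((a j0 : ℝ) + a L) else 0) :
          EuclideanSpace ℝ (Fin d)) with hx
      have hxL : x L = (a j0 : ℝ) + a L := by
        simp [hx, Ne.symm hne]
      have hxsum : ∀ b : Fin d → ℕ, ∑ j ∈ filt, (b j : ℝ) * x j = b j0 := by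
        intro b
        rw [Finset.sum_eq_single j0]
        · simp [hx]
        · intro j hj hjne
          have hj' : (j:ℕ) < d-1 := by simpa [hfilt] using hj
          have hjL : j ≠ L := fun e => hNL (e ▸ hj')
          simp [hx, hjne, hjL]
        · intro hct; exact absurd hj0 hct
      have hxa : x ∈ hyp a := by rw [hmem, hxL, hxsum]
      have hx' := (hsets x).mp hxa
      rw [hmem, hxL, hxsum] at hx'
      linarith [hLL, hx']
    funext j
    by_cases hj : (j:ℕ) < d-1
    · exact (Nat.cast_injective : Function.Injective (Nat.cast : ℕ → ℝ)) (haj j hj)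
    · have hjL : j = L := by
        apply Fin.ext
        have := j.isLt
        simp only [hL]
        omega
      rw [hjL]
      exact (Nat.cast_injective : Function.Injective (Nat.cast : ℕ → ℝ)) hLL
  refine ⟨hcard, fun a ha haL => key a ha haL, ⟨A.image hyp, ?_, ?_⟩, ?_⟩
  · rw [Finset.card_image_of_injOn hinjA, hAcard]
  · intro h hh
    rw [Finset.mem_image] at hh
    obtain ⟨a, haA, rfl⟩ := hh
    rw [hA, Fintype.mem_piFinset] at haA
    constructor
    · have hdir : (hyp a).direction = LinearMap.ker (f a) := by
        rw [hhyp]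
        exact AffineSubspace.direction_mk' _ _
      rw [hdir]
      exact hker a
    · have hset : (P ∩ ((hyp a : AffineSubspace ℝ (EuclideanSpace ℝ (Fin d))) :
          Set (EuclideanSpace ℝ (Fin d)))) = P ∩ {x : EuclideanSpace ℝ (Fin d) |
          x L = (∑ j ∈ filt, (a j : ℝ) * x j) + (a L : ℝ)} := by
        apply congrArg (P ∩ ·)
        ext x
        exact hmem a x
      rw [hset]
      apply key a
      · intro j hj
        have := haA j
        simp only [hj, if_true, Finset.mem_range] at this
        omega
      · have := haA L
        simp only [hNL, if_false, Finset.mem_range] at this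
        omega
  · have hexp : (d-1)*(d+1) + 1 = d*d := by
      obtain ⟨e, rfl⟩ : ∃ e, d = e + 2 := ⟨d - 2, by omega⟩
      have h4 : e+2-1 = e+1 := by omega
      rw [h4]; ring
    have hdne : (d:ℝ) ≠ 0 := Nat.cast_ne_zero.mpr (by omega)
    have hune : (u:ℝ) ≠ 0 := Nat.cast_ne_zero.mpr (by omega)
    rw [eq_div_iff (mul_ne_zero (pow_ne_zero _ hdne) (pow_ne_zero _ (pow_ne_zero _ hune)))]
    push_cast
    rw [mul_pow, mul_pow, ← pow_mul, ← pow_mul, ← hexp, pow_add, pow_one]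
    ring
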